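/- Let (α*, r*) be an optimal solution to CP(G, h). Then for every vertex u ∈ V, the h-clique compact number of u equals r*(u), i.e., φ_h(u) = r*(u). -/

import Mathlib

open Finset

variable {V : Type*} [Fintype V] [DecidableEq V]

/-- `Ψ_h(G[S])`: the set of `h`-cliques of `G` all of whose vertices lie in `S`
(equivalently, the `h`-cliques of the induced subgraph `G[S]`). -/
def cliquesIn (G : SimpleGraph V) [DecidableRel G.Adj] (h : ℕ) (S : Finset V) :
    Finset (Finset V) :=
  Finset.univ.filter fun c => G.IsNClique h c ∧ c ⊆ S

/-- the `h`-clique density `d_h(G[S]) = |Ψ_h(G[S])| / |S|`. -/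
noncomputable def cliqueDensity (G : SimpleGraph V) [DecidableRel G.Adj] (h : ℕ)
    (S : Finset V) : ℝ :=
  ((cliquesIn G h S).card : ℝ) / (S.card : ℝ)

/-- `G[S]` is `h`-clique `ρ`-compact: `S` is nonempty, the induced subgraph is
connected, and removing any nonempty `U ⊆ S` removes at least `ρ·|U|` `h`-cliques. -/
def IsCliqueCompact (G : SimpleGraph V) [DecidableRel G.Adj] (h : ℕ) (ρ : ℝ)
    (S : Finset V) : Prop :=
  S.Nonempty ∧ (G.induce (S : Set V)).Connected ∧
    ∀ U ⊆ S, U.Nonempty →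
      ρ * (U.card : ℝ) ≤ ((cliquesIn G h S).card : ℝ) - ((cliquesIn G h (S \ U)).card : ℝ)

/-- `G[S]` is a locally `h`-clique densest subgraph of `G`. -/
def IsLhCDS (G : SimpleGraph V) [DecidableRel G.Adj] (h : ℕ) (S : Finset V) : Prop :=
  IsCliqueCompact G h (cliqueDensity G h S) S ∧
    ¬ ∃ S' : Finset V, S ⊂ S' ∧ IsCliqueCompact G h (cliqueDensity G h S) S'

/-- the `h`-clique compact number `φ_h(u)` of a vertex `u`. -/
noncomputable def compactNumber (G : SimpleGraph V) [DecidableRel G.Adj] (h : ℕ)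
    (u : V) : ℝ :=
  sSup {ρ : ℝ | 0 ≤ ρ ∧ ∃ S : Finset V, u ∈ S ∧ IsCliqueCompact G h ρ S}

/-- `α` is a feasible solution to the convex program `CP(G,h)`: each `h`-clique
distributes a unit weight, nonnegatively, among its vertices. -/
def CPFeasible (G : SimpleGraph V) [DecidableRel G.Adj] (h : ℕ)
    (α : Finset V → V → ℝ) : Prop :=
  (∀ ψ ∈ cliquesIn G h Finset.univ, ∀ u ∈ ψ, 0 ≤ α ψ u) ∧
    (∀ ψ ∈ cliquesIn G h Finset.univ, ∑ u ∈ ψ, α ψ u = 1)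

/-- `r(u)`: the total weight received by vertex `u` under `α`. -/
def cpR (G : SimpleGraph V) [DecidableRel G.Adj] (h : ℕ) (α : Finset V → V → ℝ)
    (u : V) : ℝ :=
  ∑ ψ ∈ (cliquesIn G h Finset.univ).filter (fun ψ => u ∈ ψ), α ψ u

/-- `α` is an optimal solution to `CP(G,h)`: it is feasible and minimizes
`Σ_u r(u)²` over all feasible solutions. -/
def CPOptimal (G : SimpleGraph V) [DecidableRel G.Adj] (h : ℕ)
    (α : Finset V → V → ℝ) : Prop :=
  CPFeasible G h α ∧
    ∀ β : Finset V → V → ℝ, CPFeasible G h β →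
      ∑ u : V, (cpR G h α u) ^ 2 ≤ ∑ u : V, (cpR G h β u) ^ 2


section StmtSevenAux
variable {G : SimpleGraph V} [DecidableRel G.Adj] {h : ℕ} {α : Finset V → V → ℝ}

lemma mem_cliquesIn' {S ψ : Finset V} :
    ψ ∈ cliquesIn G h S ↔ G.IsNClique h ψ ∧ ψ ⊆ S := by
  simp [cliquesIn]

lemma cliquesIn_mono' {S T : Finset V} (hST : S ⊆ T) :
    cliquesIn G h S ⊆ cliquesIn G h T := by
  intro ψ hψ
  rw [mem_cliquesIn'] at *
  exact ⟨hψ.1, hψ.2.trans hST⟩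

lemma cpR_nonneg' (hf : CPFeasible G h α) (v : V) : 0 ≤ cpR G h α v := by
  refine Finset.sum_nonneg fun ψ hψ => ?_
  rw [Finset.mem_filter] at hψ
  exact hf.1 ψ hψ.1 v hψ.2

lemma kkt' (hopt : CPOptimal G h α) {ψ : Finset V} (hψ : ψ ∈ cliquesIn G h Finset.univ)
    {v w : V} (hv : v ∈ ψ) (hw : w ∈ ψ) (hpos : 0 < α ψ v) :
    cpR G h α v ≤ cpR G h α w := by
  by_contra hlt
  push_neg at hlt
  have hvw : v ≠ w := by rintro rfl; exact lt_irrefl _ hlt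
  set r := cpR G h α with hr
  set ε : ℝ := min (α ψ v) ((r v - r w)/2) with hε
  have hε0 : 0 < ε := lt_min hpos (by linarith)
  have hεα : ε ≤ α ψ v := min_le_left _ _
  have hεr : ε ≤ (r v - r w)/2 := min_le_right _ _
  set β : Finset V → V → ℝ := fun ψ' x =>
    α ψ' x + (if ψ' = ψ ∧ x = v then -ε else 0) + (if ψ' = ψ ∧ x = w then ε else 0) with hβ
  have hfeasβ : CPFeasible G h β := by
    constructor
    · intro ψ' hψ' x hx
      have h0 := hopt.1.1 ψ' hψ' x hx
      simp only [hβ]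
      split_ifs with h1 h2 h2
      · exact absurd (h1.2.symm.trans h2.2) hvw
      · obtain ⟨rfl, rfl⟩ := h1; linarith
      · linarith
      · linarith
    · intro ψ' hψ'
      simp only [hβ, Finset.sum_add_distrib]
      rw [hopt.1.2 ψ' hψ']
      by_cases hq : ψ' = ψ
      · subst hq
        simp [Finset.sum_ite_eq', hv, hw]
      · simp [hq]
  have hrβ : ∀ x, cpR G h β x = r x + ((if x = v then -ε else 0) + (if x = w then ε else 0)) := by
    intro x
    have key : ∀ (y : V), y ∈ ψ → ∀ c : ℝ,
        (∑ ψ' ∈ (cliquesIn G h Finset.univ).filter (fun ψ' => x ∈ ψ'),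
          (if ψ' = ψ ∧ x = y then c else 0)) = if x = y then c else 0 := by
      intro y hy c
      by_cases hxy : x = y
      · subst hxy
        simp only [and_true, if_pos rfl]
        rw [Finset.sum_ite_eq' ((cliquesIn G h Finset.univ).filter (fun ψ' => x ∈ ψ')) ψ
          (fun _ => c)]
        simp [Finset.mem_filter, hψ, hy]
      · simp [hxy]
    show (∑ ψ' ∈ _, β ψ' x) = _
    simp only [hβ, Finset.sum_add_distrib, key v hv (-ε), key w hw ε]
    rw [hr]
    simp only [cpR]
    ring
  have hobj : ∑ x : V, (cpR G h β x)^2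
      = ∑ x : V, r x ^ 2 + (2 * r v * (-ε) + ε^2 + (2 * r w * ε + ε^2)) := by
    have hsplit : ∀ x : V, (cpR G h β x)^2 = r x ^ 2 +
        (2 * r x * ((if x = v then -ε else 0) + (if x = w then ε else 0))
          + ((if x = v then -ε else 0) + (if x = w then ε else 0))^2) := by
      intro x; rw [hrβ x]; ring
    rw [Finset.sum_congr rfl (fun x _ => hsplit x), Finset.sum_add_distrib]
    congr 1
    rw [← Finset.sum_subset (Finset.subset_univ ({v, w} : Finset V))]
    · rw [Finset.sum_pair hvw]
      simp [hvw, Ne.symm hvw]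
    · intro x _ hx
      simp only [Finset.mem_insert, Finset.mem_singleton, not_or] at hx
      simp [hx.1, hx.2]
  have hle := hopt.2 β hfeasβ
  rw [hobj] at hle
  nlinarith [hε0, hεr, hεα]

lemma compact_le' (hopt : CPOptimal G h α) {ρ : ℝ} {S : Finset V} {u : V}
    (hu : u ∈ S) (hc : IsCliqueCompact G h ρ S) : ρ ≤ cpR G h α u := by
  classical
  set r := cpR G h α with hr
  by_contra hlt
  push_neg at hlt
  set U := S.filter (fun v => r v < ρ) with hU
  have hUS : U ⊆ S := Finset.filter_subset _ _
  have hUne : U.Nonempty := ⟨u, Finset.mem_filter.2 ⟨hu, hlt⟩⟩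
  have hcomp := hc.2.2 U hUS hUne
  set R := cliquesIn G h S \ cliquesIn G h (S \ U) with hR
  have hsub : cliquesIn G h (S \ U) ⊆ cliquesIn G h S :=
    cliquesIn_mono' (Finset.sdiff_subset)
  have hcard : ((cliquesIn G h S).card : ℝ) - ((cliquesIn G h (S \ U)).card : ℝ)
      = (R.card : ℝ) := by
    rw [hR, Finset.card_sdiff_of_subset hsub]
    have hle' := Finset.card_le_card hsub
    push_cast [hle']
    ring
  -- each removed clique sends all its weight into U
  have key : ∀ ψ ∈ R, (1:ℝ) = ∑ v ∈ ψ.filter (fun v => v ∈ U), α ψ v := by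
    intro ψ hψR
    rw [hR, Finset.mem_sdiff] at hψR
    obtain ⟨hψS, hψnot⟩ := hψR
    have hψuniv : ψ ∈ cliquesIn G h Finset.univ :=
      cliquesIn_mono' (Finset.subset_univ S) hψS
    obtain ⟨hclique, hsubS⟩ := mem_cliquesIn'.1 hψS
    have hnotsub : ¬ ψ ⊆ S \ U := fun hcon => hψnot (mem_cliquesIn'.2 ⟨hclique, hcon⟩)
    obtain ⟨v0, hv0ψ, hv0n⟩ := Finset.not_subset.1 hnotsub
    have hv0U : v0 ∈ U := by
      rcases Finset.mem_sdiff.not.1 hv0n with h'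
      by_contra hcon
      exact hv0n (Finset.mem_sdiff.2 ⟨hsubS hv0ψ, hcon⟩)
    have hv0r : r v0 < ρ := (Finset.mem_filter.1 hv0U).2
    have hzero : ∀ v ∈ ψ.filter (fun v => ¬ v ∈ U), α ψ v = 0 := by
      intro v hv
      rw [Finset.mem_filter] at hv
      obtain ⟨hvψ, hvU⟩ := hv
      have hvS : v ∈ S := hsubS hvψ
      have hvr : ρ ≤ r v := by
        by_contra hcon
        push_neg at hcon
        exact hvU (Finset.mem_filter.2 ⟨hvS, hcon⟩)
      by_contra hne
      have hpos : 0 < α ψ v :=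
        lt_of_le_of_ne (hopt.1.1 ψ hψuniv v hvψ) (Ne.symm hne)
      have := kkt' hopt hψuniv hvψ hv0ψ hpos
      rw [← hr] at this
      linarith
    have hsum : ∑ v ∈ ψ, α ψ v = 1 := hopt.1.2 ψ hψuniv
    rw [← Finset.sum_filter_add_sum_filter_not ψ (fun v => v ∈ U)] at hsum
    rw [Finset.sum_eq_zero hzero, add_zero] at hsum
    exact hsum.symm
  -- |R| ≤ ∑_{v ∈ U} r v
  have hRle : (R.card : ℝ) ≤ ∑ v ∈ U, r v := by
    have e1 : (R.card : ℝ) = ∑ ψ ∈ R, ∑ v ∈ U, (if v ∈ ψ then α ψ v else 0) := by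
      rw [Finset.card_eq_sum_ones R]
      push_cast
      refine Finset.sum_congr rfl fun ψ hψR => ?_
      rw [key ψ hψR]
      have : ψ.filter (fun v => v ∈ U) = U.filter (fun v => v ∈ ψ) := by
        ext x; simp [and_comm]
      rw [this, Finset.sum_filter]
    rw [e1, Finset.sum_comm]
    refine Finset.sum_le_sum fun v hv => ?_
    rw [← Finset.sum_filter]
    rw [hr]
    show _ ≤ cpR G h α v
    unfold cpR
    refine Finset.sum_le_sum_of_subset_of_nonneg ?_ ?_
    · intro ψ hψ
      rw [Finset.mem_filter] at hψ ⊢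
      exact ⟨cliquesIn_mono' (Finset.subset_univ S) (Finset.mem_sdiff.1 (hR ▸ hψ.1)).1, hψ.2⟩
    · intro ψ hψ _
      rw [Finset.mem_filter] at hψ
      exact hopt.1.1 ψ hψ.1 v hψ.2
  have hsumlt : ∑ v ∈ U, r v < ρ * U.card := by
    calc ∑ v ∈ U, r v < ∑ v ∈ U, ρ :=
      Finset.sum_lt_sum_of_nonempty hUne (fun v hv => (Finset.mem_filter.1 hv).2)
    _ = ρ * U.card := by rw [Finset.sum_const, nsmul_eq_mul]; ring
  rw [hcard] at hcomp
  linarith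

lemma compact_ge' (hopt : CPOptimal G h α) (u : V) :
    ∃ S : Finset V, u ∈ S ∧ IsCliqueCompact G h (cpR G h α u) S := by
  classical
  set r := cpR G h α with hr
  set H : SimpleGraph V :=
    { Adj := fun x y => G.Adj x y ∧ r u ≤ r x ∧ r u ≤ r y,
      symm := by constructor; rintro x y ⟨a, b, c⟩; exact ⟨a.symm, c, b⟩,
      loopless := by constructor; rintro x ⟨a, _, _⟩; exact G.loopless.irrefl x a } with hHdef
  set S : Finset V := Finset.univ.filter (fun v => r u ≤ r v ∧ H.Reachable u v) with hSdef
  have huS : u ∈ S := Finset.mem_filter.2 ⟨Finset.mem_univ _, le_refl _, SimpleGraph.Reachable.refl _⟩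
  have step : ∀ {x y : V}, x ∈ S → H.Adj x y → y ∈ S := by
    intro x y hx hxy
    rw [hSdef, Finset.mem_filter] at hx ⊢
    exact ⟨Finset.mem_univ _, hxy.2.2, hx.2.2.trans hxy.reachable⟩
  have walkS : ∀ {x y : V} (_ : H.Walk x y) (hx : x ∈ S),
      ∃ hy : y ∈ S, (G.induce (S : Set V)).Reachable ⟨x, Finset.mem_coe.2 hx⟩ ⟨y, Finset.mem_coe.2 hy⟩ := by
    intro x y p
    induction p with
    | nil => intro hx; exact ⟨hx, SimpleGraph.Reachable.refl _⟩
    | @cons a b c hab p ih =>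
      intro hx
      have hb : b ∈ S := step hx hab
      obtain ⟨hy, hreach⟩ := ih hb
      refine ⟨hy, SimpleGraph.Reachable.trans ?_ hreach⟩
      exact SimpleGraph.Adj.reachable (by exact hab.1)
  have hconn : (G.induce (S : Set V)).Connected := by
    rw [SimpleGraph.connected_iff]
    refine ⟨?_, ⟨⟨u, Finset.mem_coe.2 huS⟩⟩⟩
    rintro ⟨x, hx⟩ ⟨y, hy⟩
    have hx' : x ∈ S := Finset.mem_coe.1 hx
    have hy' : y ∈ S := Finset.mem_coe.1 hy
    obtain ⟨px⟩ := (Finset.mem_filter.1 hx').2.2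
    obtain ⟨py⟩ := (Finset.mem_filter.1 hy').2.2
    obtain ⟨hx2, rx⟩ := walkS px huS
    obtain ⟨hy2, ry⟩ := walkS py huS
    exact rx.symm.trans ry
  refine ⟨S, huS, ⟨u, huS⟩, hconn, ?_⟩
  intro U hUS hUne
  set R := cliquesIn G h S \ cliquesIn G h (S \ U) with hR
  have hsub : cliquesIn G h (S \ U) ⊆ cliquesIn G h S :=
    cliquesIn_mono' (Finset.sdiff_subset)
  have hcard : ((cliquesIn G h S).card : ℝ) - ((cliquesIn G h (S \ U)).card : ℝ)
      = (R.card : ℝ) := by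
    rw [hR, Finset.card_sdiff_of_subset hsub]
    have hle' := Finset.card_le_card hsub
    push_cast [hle']
    ring
  -- main chain
  have h1 : r u * (U.card : ℝ) ≤ ∑ v ∈ U, r v := by
    calc r u * (U.card : ℝ) = ∑ _v ∈ U, r u := by rw [Finset.sum_const, nsmul_eq_mul]; ring
    _ ≤ ∑ v ∈ U, r v := Finset.sum_le_sum fun v hv =>
        (Finset.mem_filter.1 (hUS hv)).2.1
  have h2 : ∀ v ∈ U, r v = ∑ ψ ∈ R.filter (fun ψ => v ∈ ψ), α ψ v := by
    intro v hv
    have hvS : v ∈ S := hUS hv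
    have hvr : r u ≤ r v := (Finset.mem_filter.1 hvS).2.1
    have hvreach : H.Reachable u v := (Finset.mem_filter.1 hvS).2.2
    rw [hr]
    show cpR G h α v = _
    unfold cpR
    rw [← Finset.sum_subset (s₁ := R.filter (fun ψ => v ∈ ψ))]
    · intro ψ hψ
      rw [Finset.mem_filter] at hψ ⊢
      exact ⟨cliquesIn_mono' (Finset.subset_univ S) (Finset.mem_sdiff.1 (hR ▸ hψ.1)).1, hψ.2⟩
    · intro ψ hψmem hψnot
      rw [Finset.mem_filter] at hψmem
      obtain ⟨hψuniv, hvψ⟩ := hψmem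
      by_contra hne
      have hpos : 0 < α ψ v :=
        lt_of_le_of_ne (hopt.1.1 ψ hψuniv v hvψ) (Ne.symm hne)
      -- all weight-receiving vertex's clique lies in S
      have hψS : ψ ⊆ S := by
        intro w hwψ
        by_cases hwv : w = v
        · exact hwv ▸ hvS
        · have hadj : G.Adj v w := (mem_cliquesIn'.1 hψuniv).1.1 hvψ hwψ (Ne.symm hwv)
          have hwr : r u ≤ r w := by
            have := kkt' hopt hψuniv hvψ hwψ hpos
            rw [← hr] at this
            linarith
          exact step hvS ⟨hadj, hvr, hwr⟩
      have hψR : ψ ∈ R := by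
        rw [hR, Finset.mem_sdiff]
        constructor
        · exact mem_cliquesIn'.2 ⟨(mem_cliquesIn'.1 hψuniv).1, hψS⟩
        · intro hcon
          have := (mem_cliquesIn'.1 hcon).2 hvψ
          rw [Finset.mem_sdiff] at this
          exact this.2 hv
      exact hψnot (Finset.mem_filter.2 ⟨hψR, hvψ⟩)
  have h3 : ∑ v ∈ U, ∑ ψ ∈ R.filter (fun ψ => v ∈ ψ), α ψ v ≤ (R.card : ℝ) := by
    have e1 : ∑ v ∈ U, ∑ ψ ∈ R.filter (fun ψ => v ∈ ψ), α ψ v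
        = ∑ ψ ∈ R, ∑ v ∈ U, (if v ∈ ψ then α ψ v else 0) := by
      rw [Finset.sum_comm]
      refine Finset.sum_congr rfl fun v _ => ?_
      rw [Finset.sum_filter]
    rw [e1, Finset.card_eq_sum_ones R]
    push_cast
    refine Finset.sum_le_sum fun ψ hψR => ?_
    have hψuniv : ψ ∈ cliquesIn G h Finset.univ :=
      cliquesIn_mono' (Finset.subset_univ S) (Finset.mem_sdiff.1 (hR ▸ hψR)).1
    rw [← Finset.sum_filter]
    calc ∑ v ∈ U.filter (fun v => v ∈ ψ), α ψ v ≤ ∑ v ∈ ψ, α ψ v := by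
          refine Finset.sum_le_sum_of_subset_of_nonneg ?_ ?_
          · intro v hv; exact (Finset.mem_filter.1 hv).2
          · intro v hv _; exact hopt.1.1 ψ hψuniv v hv
    _ = 1 := hopt.1.2 ψ hψuniv
  rw [hcard]
  calc r u * (U.card : ℝ) ≤ ∑ v ∈ U, r v := h1
  _ = ∑ v ∈ U, ∑ ψ ∈ R.filter (fun ψ => v ∈ ψ), α ψ v := Finset.sum_congr rfl h2
  _ ≤ (R.card : ℝ) := h3

end StmtSevenAux

/-- If `(α*, r*)` is an optimal solution to `CP(G,h)`, then for every
vertex `u`, the `h`-clique compact number of `u` equals `r*(u)`. -/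
theorem stmt_7 (G : SimpleGraph V) [DecidableRel G.Adj] (h : ℕ) (hh : 2 ≤ h)
    (α : Finset V → V → ℝ) (hopt : CPOptimal G h α) :
    ∀ u : V, compactNumber G h u = cpR G h α u := by
  intro u
  have hru : 0 ≤ cpR G h α u := cpR_nonneg' hopt.1 u
  obtain ⟨S, huS, hcomp⟩ := compact_ge' hopt u
  have hmem : cpR G h α u ∈ {ρ : ℝ | 0 ≤ ρ ∧ ∃ S : Finset V, u ∈ S ∧ IsCliqueCompact G h ρ S} :=
    ⟨hru, S, huS, hcomp⟩
  have hub : ∀ ρ ∈ {ρ : ℝ | 0 ≤ ρ ∧ ∃ S : Finset V, u ∈ S ∧ IsCliqueCompact G h ρ S},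
      ρ ≤ cpR G h α u := by
    rintro ρ ⟨-, S', hu', hc'⟩
    exact compact_le' hopt hu' hc'
  unfold compactNumber
  exact le_antisymm (csSup_le ⟨_, hmem⟩ hub) (le_csSup ⟨_, hub⟩ hmem)
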